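/- Implementing an improving cycle weakly decreases every tail probability and strictly decreases at least one: if y is obtained from x by an improving cycle with transfer amount ε > 0, then b_i^y(k) ≤ b_i^x(k) for all agents i and all ranks k, with strict inequality for at least one pair (i,k). -/
import Mathlib


open Finset

/-- An n×n matrix with nonnegative real entries whose rows and columns each sum to 1. -/
def Bistochastic {n : ℕ} (x : Fin n → Fin n → ℝ) : Prop :=
  (∀ i o, 0 ≤ x i o) ∧ (∀ i, ∑ o, x i o = 1) ∧ (∀ o, ∑ i, x i o = 1)

/-- `tailProb rank x i k` = probability that agent `i` receives an object ranked `k`-th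
or worse (ranks are 0-indexed: rank 0 = most preferred). -/
def tailProb {n : ℕ} (rank : Fin n → Fin n → Fin n) (x : Fin n → Fin n → ℝ)
    (i k : Fin n) : ℝ :=
  ∑ o ∈ Finset.univ.filter (fun o => k ≤ rank i o), x i o

/-- The values of `v` rearranged in non-increasing order. -/
noncomputable def sortedDesc {n : ℕ} (v : Fin n → ℝ) : Fin n → ℝ :=
  fun j => v (Tuple.sort (fun i => -v i) j)

/-- Block `t` of `Bvec rank x` is the non-increasing rearrangement of the tail
probabilities at threshold `n-1-t`; so blocks run from the worst rank down. -/
noncomputable def Bvec {n : ℕ} (rank : Fin n → Fin n → Fin n) (x : Fin n → Fin n → ℝ) :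
    Fin n → Fin n → ℝ :=
  fun t => sortedDesc (fun i => tailProb rank x i t.rev)

/-- Lexicographic strict order on doubly-indexed vectors (outer index first). -/
def BlockLexLt {α β : Type*} [LinearOrder α] [LinearOrder β] (u v : α → β → ℝ) : Prop :=
  ∃ t s, u t s < v t s ∧ ∀ t' s', (t' < t ∨ (t' = t ∧ s' < s)) → u t' s' = v t' s'

/-- `x` Rawlsian-dominates `y`. -/
def RDom {n : ℕ} (rank : Fin n → Fin n → Fin n) (x y : Fin n → Fin n → ℝ) : Prop :=
  BlockLexLt (Bvec rank x) (Bvec rank y)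

/-- A Rawlsian assignment: a bistochastic matrix not R-dominated by any other. -/
def Rawlsian {n : ℕ} (rank : Fin n → Fin n → Fin n) (x : Fin n → Fin n → ℝ) : Prop :=
  Bistochastic x ∧ ∀ y, Bistochastic y → ¬ RDom rank y x

/-- Implementing an improving cycle weakly decreases every tail probability and
strictly decreases at least one. -/
theorem improving_cycle_tailProb {n K : ℕ} (rank : Fin n → Fin n → Fin n)
    (hrank : ∀ i, Function.Bijective (rank i))
    (x : Fin n → Fin n → ℝ) (hx : Bistochastic x)
    (a ob : Fin (K + 1) → Fin n) (ha : Function.Injective a) (hob : Function.Injective ob)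
    (hpos : ∀ k, 0 < x (a k) (ob k))
    (himp : ∀ k, rank (a k) (ob (k - 1)) < rank (a k) (ob k))
    (ε : ℝ) (hε : IsLeast (Set.range fun k => x (a k) (ob k)) ε) (hεpos : 0 < ε)
    (y : Fin n → Fin n → ℝ)
    (hy : ∀ i o, y i o = x i o
      + (if ∃ k, a k = i ∧ ob (k - 1) = o then ε else 0)
      - (if ∃ k, a k = i ∧ ob k = o then ε else 0)) :
    (∀ i k, tailProb rank y i k ≤ tailProb rank x i k) ∧
      (∃ i k, tailProb rank y i k < tailProb rank x i k) := by
  have key : ∀ (m : Fin (K+1)) (k : Fin n),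
      tailProb rank y (a m) k = tailProb rank x (a m) k
        + (if k ≤ rank (a m) (ob (m-1)) then ε else 0)
        - (if k ≤ rank (a m) (ob m) then ε else 0) := by
    intro m k
    have hya : ∀ o, y (a m) o = x (a m) o + (if o = ob (m-1) then ε else 0)
        - (if o = ob m then ε else 0) := by
      intro o
      rw [hy]
      have h1 : (∃ j, a j = a m ∧ ob (j - 1) = o) ↔ o = ob (m-1) := by
        constructor
        · rintro ⟨j, hj1, hj2⟩; rw [ha hj1] at hj2; exact hj2.symm
        · rintro rfl; exact ⟨m, rfl, rfl⟩
      have h2 : (∃ j, a j = a m ∧ ob j = o) ↔ o = ob m := by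
        constructor
        · rintro ⟨j, hj1, hj2⟩; rw [ha hj1] at hj2; exact hj2.symm
        · rintro rfl; exact ⟨m, rfl, rfl⟩
      rw [if_congr h1 rfl rfl, if_congr h2 rfl rfl]
    unfold tailProb
    simp only [hya]
    rw [Finset.sum_sub_distrib, Finset.sum_add_distrib,
        Finset.sum_ite_eq', Finset.sum_ite_eq']
    simp [Finset.mem_filter]
  constructor
  · intro i k
    by_cases hi : ∃ m, a m = i
    · obtain ⟨m, rfl⟩ := hi
      rw [key m k]
      by_cases h1 : k ≤ rank (a m) (ob (m-1))
      · have h2 : k ≤ rank (a m) (ob m) := h1.trans (himp m).le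
        rw [if_pos h1, if_pos h2]; linarith
      · rw [if_neg h1]
        by_cases h2 : k ≤ rank (a m) (ob m)
        · rw [if_pos h2]; linarith
        · rw [if_neg h2]; linarith
    · have : ∀ o, y i o = x i o := by
        intro o
        rw [hy]
        rw [if_neg, if_neg]
        · ring
        · rintro ⟨j, hj1, _⟩; exact hi ⟨j, hj1⟩
        · rintro ⟨j, hj1, _⟩; exact hi ⟨j, hj1⟩
      unfold tailProb
      simp only [this, le_refl]
  · refine ⟨a 0, rank (a 0) (ob 0), ?_⟩
    rw [key 0 (rank (a 0) (ob 0))]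
    rw [if_neg (not_le.mpr (himp 0)), if_pos le_rfl]
    linarith
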